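/- arXiv:0802.2322 — 2 statements merged into one kernel-verified Lean document; each statement's English description precedes it below -/
import Mathlib

section
/- If x is a farthest point of y in C with respect to D_f, then for every c ∈ C, ⟨∇f(y) − ∇f(x), c − x⟩ ≥ 0. -/
open scoped RealInnerProductSpace


lemma grad_ineq {J : ℕ} {f : EuclideanSpace ℝ (Fin J) → ℝ} {U : Set (EuclideanSpace ℝ (Fin J))}
    (hconv : ConvexOn ℝ U f) {x c g : EuclideanSpace ℝ (Fin J)}
    (hg : HasGradientAt f g x) (hxU : x ∈ U) (hcU : c ∈ U) :
    ⟪g, c - x⟫ ≤ f c - f x := by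
  set v := c - x with hv
  have hcurve : HasDerivAt (fun t : ℝ => x + t • v) v 0 := by
    simpa using ((hasDerivAt_id (0:ℝ)).smul_const v).const_add x
  have hcomp : HasDerivAt (fun t : ℝ => f (x + t • v)) ⟪g, v⟫ 0 := by
    have h0 : x + (0:ℝ) • v = x := by simp
    have := HasFDerivAt.comp_hasDerivAt 0 (h0 ▸ hg.hasFDerivAt) hcurve
    simp at this
    exact this
  have hslope : Filter.Tendsto (slope (fun t : ℝ => f (x + t • v)) 0) (nhdsWithin 0 (Set.Ioi 0))
      (nhds ⟪g, v⟫) := by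
    have := hasDerivAt_iff_tendsto_slope.mp hcomp
    exact this.mono_left (nhdsWithin_mono _ fun t ht => ne_of_gt ht)
  refine le_of_tendsto hslope ?_
  filter_upwards [Ioo_mem_nhdsGT_of_mem (by norm_num : (0:ℝ) ∈ Set.Ico 0 1)] with t ht
  have ht0 : 0 < t := ht.1
  have ht1 : t < 1 := ht.2
  have hpt : f (x + t • v) ≤ (1 - t) * f x + t * f c := by
    have := hconv.2 hxU hcU (by linarith : (0:ℝ) ≤ 1 - t) ht0.le (by ring)
    have heq : (1 - t) • x + t • c = x + t • v := by
      simp [hv, smul_sub]; module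
    rw [heq] at this
    simpa using this
  rw [slope_def_field]
  rw [sub_zero, zero_smul, add_zero, div_le_iff₀ ht0]
  nlinarith


/-- Bregman distance for real-valued `f` with gradient `f'`. -/
noncomputable abbrev bregman {J : ℕ}
    (f : EuclideanSpace ℝ (Fin J) → ℝ) (f' : EuclideanSpace ℝ (Fin J) → EuclideanSpace ℝ (Fin J))
    (x y : EuclideanSpace ℝ (Fin J)) : ℝ :=
  f x - f y - ⟪f' y, x - y⟫

/-- If `x` is a farthest point of `y` in `C` w.r.t. `D_f`, then
`⟪∇f(y) - ∇f(x), c - x⟫ ≥ 0` for every `c ∈ C`. -/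
theorem farthest_point_inner_nonneg {J : ℕ}
    (f : EuclideanSpace ℝ (Fin J) → ℝ) (U : Set (EuclideanSpace ℝ (Fin J)))
    (hU : IsOpen U) (hUne : U.Nonempty)
    (hconv : ConvexOn ℝ U f)
    (f' : EuclideanSpace ℝ (Fin J) → EuclideanSpace ℝ (Fin J))
    (hf' : ∀ y ∈ U, HasGradientAt f (f' y) y)
    (C : Set (EuclideanSpace ℝ (Fin J))) (hCne : C.Nonempty)
    (hCcp : IsCompact C) (hCU : C ⊆ U)
    (y : EuclideanSpace ℝ (Fin J)) (hy : y ∈ U)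
    (x : EuclideanSpace ℝ (Fin J)) (hx : x ∈ C)
    (hfar : ∀ c ∈ C, bregman f f' c y ≤ bregman f f' x y) :
    ∀ c ∈ C, 0 ≤ ⟪f' y - f' x, c - x⟫ := by
  intro c hc
  have h1 : ⟪f' x, c - x⟫ ≤ f c - f x :=
    grad_ineq hconv (hf' x (hCU hx)) (hCU hx) (hCU hc)
  have h2 : f c - f x ≤ ⟪f' y, c - x⟫ := by
    have := hfar c hc
    have hsplit : ⟪f' y, c - y⟫ - ⟪f' y, x - y⟫ = ⟪f' y, c - x⟫ := by
      rw [← inner_sub_right]; congr 1; abel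
    simp only [bregman] at this
    linarith [hsplit]
  rw [inner_sub_left]
  linarith
end

section
/- If every point y ∈ U has a unique farthest point in C w.r.t. D_f (C is D_f-Klee), then the single-valued farthest-point map Q_C : U → C is continuous, and the map x* ↦ −Q_C(∇f*(x*)) is continuous and maximal monotone on ℝ^J. -/
open scoped RealInnerProductSpace
open Filter Topology

lemma grad_ineq_s10 {J : ℕ} {f : EuclideanSpace ℝ (Fin J) → ℝ} {U : Set (EuclideanSpace ℝ (Fin J))}
    (hconv : ConvexOn ℝ U f) {f' : EuclideanSpace ℝ (Fin J) → EuclideanSpace ℝ (Fin J)}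
    (hf' : ∀ y ∈ U, HasGradientAt f (f' y) y)
    {y z : EuclideanSpace ℝ (Fin J)} (hy : y ∈ U) (hz : z ∈ U) :
    f y + ⟪f' y, z - y⟫ ≤ f z := by
  set L : ℝ →ᵃ[ℝ] EuclideanSpace ℝ (Fin J) := AffineMap.lineMap y z with hL
  have hLt : ∀ t : ℝ, L t = y + t • (z - y) := by
    intro t
    simp [hL, AffineMap.lineMap_apply, add_comm]
  have hL0 : L 0 = y := by simp [hLt]
  have hL1 : L 1 = z := by simp [hLt]
  have hφconv : ConvexOn ℝ (L ⁻¹' U) (f ∘ L) := hconv.comp_affineMap L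
  -- derivative of f ∘ L at 0
  have hderivL : HasDerivAt L (z - y) 0 := by
    have : HasDerivAt (fun t : ℝ => y + t • (z - y)) (z - y) 0 := by
      simpa using ((hasDerivAt_id (0:ℝ)).smul_const (z - y)).const_add y
    exact this.congr_of_eventuallyEq (Eventually.of_forall fun t => (hLt t))
  have hderiv : HasDerivAt (f ∘ L) ⟪f' y, z - y⟫ 0 := by
    have h1 : HasFDerivAt f (InnerProductSpace.toDual ℝ _ (f' y)) (L 0) := by
      rw [hL0]; exact (hf' y hy).hasFDerivAt
    have := h1.comp_hasDerivAt 0 hderivL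
    simpa [InnerProductSpace.toDual_apply_apply] using this
  have hslope : Tendsto (slope (f ∘ L) 0) (𝓝[>] 0) (𝓝 ⟪f' y, z - y⟫) :=
    (hasDerivAt_iff_tendsto_slope.mp hderiv).mono_left
      (nhdsWithin_mono _ fun t ht => ne_of_gt ht)
  have hbound : ∀ᶠ t in 𝓝[>] (0:ℝ), slope (f ∘ L) 0 t ≤ f z - f y := by
    filter_upwards [Ioo_mem_nhdsGT_of_mem (Set.left_mem_Ico.mpr one_pos)] with t ht
    have h0 : (0:ℝ) ∈ L ⁻¹' U := by simp [Set.mem_preimage, hL0, hy]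
    have h1 : (1:ℝ) ∈ L ⁻¹' U := by simp [Set.mem_preimage, hL1, hz]
    have htm : t ∈ L ⁻¹' U := by
      simp only [Set.mem_preimage]
      exact hconv.1.lineMap_mem hy hz ⟨ht.1.le, ht.2.le⟩
    have h2 := hφconv.secant_mono h0 htm h1 (ne_of_gt ht.1) one_ne_zero ht.2.le
    simp only [slope_def_field, Function.comp_apply, hL0, hL1, sub_zero, div_one] at h2 ⊢
    exact h2
  have := le_of_tendsto hslope hbound
  linarith

set_option maxHeartbeats 1000000 in
lemma fprime_contOn {J : ℕ} {f : EuclideanSpace ℝ (Fin J) → ℝ} {U : Set (EuclideanSpace ℝ (Fin J))}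
    (hU : IsOpen U) (hconv : ConvexOn ℝ U f)
    {f' g : EuclideanSpace ℝ (Fin J) → EuclideanSpace ℝ (Fin J)}
    (hf' : ∀ y ∈ U, HasGradientAt f (f' y) y)
    (hgr : ∀ s, f' (g s) = s) (hgl : ∀ y ∈ U, g (f' y) = y) (hgcont : Continuous g) :
    ContinuousOn f' U := by
  have fcont : ContinuousOn f U := hconv.continuousOn hU
  intro y₀ hy₀
  obtain ⟨r, hrpos, hball⟩ := Metric.isOpen_iff.mp hU y₀ hy₀
  set r' := r / 3 with hr'
  have hr'pos : 0 < r' := by positivity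
  have hsub : Metric.closedBall y₀ (2 * r') ⊆ U := fun x hx => hball (by
    simp only [Metric.mem_closedBall] at hx
    simp only [Metric.mem_ball]
    linarith)
  obtain ⟨M, hM⟩ := (isCompact_closedBall y₀ (2 * r')).exists_bound_of_continuousOn
    (fcont.mono hsub)
  have hMnn : 0 ≤ M := le_trans (norm_nonneg _) (hM y₀ (by
    simp only [Metric.mem_closedBall, dist_self]; positivity))
  have key : ∀ w ∈ Metric.closedBall y₀ r', ‖f' w‖ ≤ 2 * M / r' := by
    intro w hw
    have hwU : w ∈ U := hsub (Metric.closedBall_subset_closedBall (by linarith) hw)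
    rcases eq_or_ne (f' w) 0 with h0 | h0
    · rw [h0]; simp; positivity
    · have hn : ‖f' w‖ ≠ 0 := norm_ne_zero_iff.mpr h0
      set d := (r' / ‖f' w‖) • f' w with hd
      have hdn : ‖d‖ = r' := by
        rw [hd, norm_smul, Real.norm_eq_abs, abs_div, abs_of_nonneg hr'pos.le,
          abs_of_nonneg (norm_nonneg _), div_mul_cancel₀]
        exact hn
      have hz : w + d ∈ Metric.closedBall y₀ (2 * r') := by
        simp only [Metric.mem_closedBall, dist_eq_norm] at hw ⊢
        have h1 : w + d - y₀ = (w - y₀) + d := by abel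
        rw [h1]
        calc ‖(w - y₀) + d‖ ≤ ‖w - y₀‖ + ‖d‖ := norm_add_le _ _
        _ ≤ r' + r' := add_le_add hw hdn.le
        _ = 2 * r' := by ring
      have hgi := grad_ineq_s10 hconv hf' hwU (hsub hz)
      have hinner : ⟪f' w, (w + d) - w⟫ = r' * ‖f' w‖ := by
        have h2 : (w + d) - w = d := by abel
        rw [h2, hd, real_inner_smul_right, real_inner_self_eq_norm_sq, pow_two,
          div_mul_eq_mul_div, mul_comm r', mul_assoc, mul_div_assoc,
          mul_div_cancel_left₀ _ hn]
        exact mul_comm _ _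
      rw [hinner] at hgi
      have hb1 : f (w + d) ≤ M := le_trans (le_abs_self _) (hM _ hz)
      have hb2 : -M ≤ f w := by
        have h3 := hM w (Metric.closedBall_subset_closedBall (by linarith) hw)
        rw [Real.norm_eq_abs, abs_le] at h3
        exact h3.1
      rw [le_div_iff₀ hr'pos]
      nlinarith
  have : Filter.Tendsto f' (nhdsWithin y₀ U) (nhds (f' y₀)) := by
    apply Filter.tendsto_of_subseq_tendsto
    intro ns hns
    rw [tendsto_nhdsWithin_iff] at hns
    have h1 : ∀ᶠ n in Filter.atTop, ns n ∈ Metric.closedBall y₀ r' ∩ U := by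
      filter_upwards [hns.1 (Metric.closedBall_mem_nhds y₀ hr'pos), hns.2] with n h1 h2
      exact ⟨h1, h2⟩
    obtain ⟨N, hN⟩ := Filter.eventually_atTop.mp h1
    have hmem : ∀ n : ℕ,
        f' (ns (n + N)) ∈ Metric.closedBall (0 : EuclideanSpace ℝ (Fin J)) (2 * M / r') := by
      intro n
      have h4 := key _ (hN (n + N) (Nat.le_add_left N n)).1
      simpa [Metric.mem_closedBall, dist_zero_right] using h4
    obtain ⟨s, _, φ, hφ, hconv2⟩ :=
      (isCompact_closedBall (0 : EuclideanSpace ℝ (Fin J)) _).tendsto_subseq hmem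
    refine ⟨fun n => φ n + N, ?_⟩
    have hconv2' : Filter.Tendsto (fun n => f' (ns (φ n + N))) Filter.atTop (nhds s) := hconv2
    have hφN : Filter.Tendsto (fun n => φ n + N) Filter.atTop Filter.atTop :=
      Filter.tendsto_atTop_mono (fun n => (hφ.le_apply).trans (Nat.le_add_right _ _))
        Filter.tendsto_id
    have ht2 : Filter.Tendsto (fun n => ns (φ n + N)) Filter.atTop (nhds y₀) :=
      hns.1.comp hφN
    have hkey : s = f' y₀ := by
      have ht1 : Filter.Tendsto (fun n => g (f' (ns (φ n + N)))) Filter.atTop (nhds (g s)) :=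
        (hgcont.tendsto s).comp hconv2'
      have heq : (fun n => g (f' (ns (φ n + N)))) = fun n => ns (φ n + N) := by
        funext n; exact hgl _ (hN _ (Nat.le_add_left N _)).2
      rw [heq] at ht1
      have h5 : g s = y₀ := tendsto_nhds_unique ht1 ht2
      rw [← h5, hgr]
    rw [hkey] at hconv2'
    exact hconv2'
  exact this

lemma QG_cont {J : ℕ} {f : EuclideanSpace ℝ (Fin J) → ℝ} {U : Set (EuclideanSpace ℝ (Fin J))}
    (hU : IsOpen U) (hconv : ConvexOn ℝ U f)
    {f' g : EuclideanSpace ℝ (Fin J) → EuclideanSpace ℝ (Fin J)}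
    (hgU : ∀ s, g s ∈ U) (hgr : ∀ s, f' (g s) = s)
    {C : Set (EuclideanSpace ℝ (Fin J))} (hCcp : IsCompact C) (hCU : C ⊆ U)
    {Q : EuclideanSpace ℝ (Fin J) → EuclideanSpace ℝ (Fin J)}
    (hQ : ∀ y ∈ U, Q y ∈ C ∧ ∀ c ∈ C, bregman f f' c y ≤ bregman f f' (Q y) y)
    (hKlee : ∀ y ∈ U, ∀ x ∈ C, (∀ c ∈ C, bregman f f' c y ≤ bregman f f' x y) → x = Q y) :
    Continuous (fun s => Q (g s)) := by
  have fcont : ContinuousOn f U := hconv.continuousOn hU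
  have hmax : ∀ s : EuclideanSpace ℝ (Fin J), ∀ c ∈ C,
      f c - ⟪s, c⟫ ≤ f (Q (g s)) - ⟪s, Q (g s)⟫ := by
    intro s c hc
    have h := (hQ (g s) (hgU s)).2 c hc
    simp only [bregman, hgr, inner_sub_right] at h
    linarith
  have huniq : ∀ s : EuclideanSpace ℝ (Fin J), ∀ x ∈ C,
      (∀ c ∈ C, f c - ⟪s, c⟫ ≤ f x - ⟪s, x⟫) → x = Q (g s) := by
    intro s x hx hmaxx
    apply hKlee (g s) (hgU s) x hx
    intro c hc
    simp only [bregman, hgr, inner_sub_right]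
    linarith [hmaxx c hc]
  rw [continuous_iff_continuousAt]
  intro s₀
  apply Filter.tendsto_of_subseq_tendsto
  intro ns hns
  have hmem : ∀ n, Q (g (ns n)) ∈ C := fun n => (hQ _ (hgU _)).1
  obtain ⟨x, hxC, φ, hφ, hconv2⟩ := hCcp.tendsto_subseq hmem
  refine ⟨φ, ?_⟩
  have hconv2' : Filter.Tendsto (fun k => Q (g (ns (φ k)))) Filter.atTop (nhds x) := hconv2
  have hnsφ : Filter.Tendsto (fun k => ns (φ k)) Filter.atTop (nhds s₀) :=
    hns.comp hφ.tendsto_atTop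
  have hx : x = Q (g s₀) := by
    apply huniq s₀ x hxC
    intro c hc
    have hl : Filter.Tendsto (fun k => f c - ⟪ns (φ k), c⟫) Filter.atTop
        (nhds (f c - ⟪s₀, c⟫)) :=
      tendsto_const_nhds.sub (hnsφ.inner tendsto_const_nhds)
    have hr : Filter.Tendsto (fun k => f (Q (g (ns (φ k)))) - ⟪ns (φ k), Q (g (ns (φ k)))⟫)
        Filter.atTop (nhds (f x - ⟪s₀, x⟫)) := by
      have h2 : Filter.Tendsto (fun k => f (Q (g (ns (φ k))))) Filter.atTop (nhds (f x)) :=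
        ((fcont.continuousAt (hU.mem_nhds (hCU hxC))).tendsto).comp hconv2'
      exact h2.sub (hnsφ.inner hconv2')
    exact le_of_tendsto_of_tendsto' hl hr (fun k => hmax _ c hc)
  rw [hx] at hconv2'
  exact hconv2'

/-- If `C` is `D_f`-Klee, the single-valued farthest-point map `Q_C : U → C` is
continuous, and `x* ↦ −Q_C(∇f*(x*))` is continuous and maximal monotone on `ℝ^J`. -/
theorem klee_farthest_map_continuous_maximal_monotone {J : ℕ}
    (f : EuclideanSpace ℝ (Fin J) → ℝ) (U : Set (EuclideanSpace ℝ (Fin J)))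
    (hU : IsOpen U) (hUne : U.Nonempty)
    (hconv : StrictConvexOn ℝ U f)
    (f' : EuclideanSpace ℝ (Fin J) → EuclideanSpace ℝ (Fin J))
    (hf' : ∀ y ∈ U, HasGradientAt f (f' y) y)
    (hcoer : Filter.Tendsto (fun x : EuclideanSpace ℝ (Fin J) => f x / ‖x‖)
      (Filter.comap norm Filter.atTop) Filter.atTop)
    (g : EuclideanSpace ℝ (Fin J) → EuclideanSpace ℝ (Fin J))
    (hgU : ∀ s, g s ∈ U) (hgr : ∀ s, f' (g s) = s) (hgl : ∀ y ∈ U, g (f' y) = y)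
    (hgcont : Continuous g)
    (C : Set (EuclideanSpace ℝ (Fin J))) (hCne : C.Nonempty)
    (hCcp : IsCompact C) (hCU : C ⊆ U)
    -- `C` is `D_f`-Klee with single-valued farthest-point map `Q`
    (Q : EuclideanSpace ℝ (Fin J) → EuclideanSpace ℝ (Fin J))
    (hQ : ∀ y ∈ U, Q y ∈ C ∧ ∀ c ∈ C, bregman f f' c y ≤ bregman f f' (Q y) y)
    (hKlee : ∀ y ∈ U, ∀ x ∈ C, (∀ c ∈ C, bregman f f' c y ≤ bregman f f' x y) → x = Q y) :
    ContinuousOn Q U ∧ Continuous (fun s => -Q (g s)) ∧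
      (∀ a b : EuclideanSpace ℝ (Fin J), 0 ≤ ⟪(-Q (g a)) - (-Q (g b)), a - b⟫) ∧
      (∀ (a u : EuclideanSpace ℝ (Fin J)),
        (∀ b : EuclideanSpace ℝ (Fin J), 0 ≤ ⟪u - (-Q (g b)), a - b⟫) → u = -Q (g a)) := by
  have hQGcont : Continuous (fun s => Q (g s)) :=
    QG_cont hU hconv.convexOn hgU hgr hCcp hCU hQ hKlee
  have hf'cont : ContinuousOn f' U :=
    fprime_contOn hU hconv.convexOn hf' hgr hgl hgcont
  have hQcont : ContinuousOn Q U := by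
    have h1 : ContinuousOn (fun y => Q (g (f' y))) U :=
      hQGcont.comp_continuousOn hf'cont
    exact h1.congr fun y hy => by simp only [hgl y hy]
  have hTcont : Continuous (fun s => -Q (g s)) := hQGcont.neg
  have hmono : ∀ a b : EuclideanSpace ℝ (Fin J), 0 ≤ ⟪(-Q (g a)) - (-Q (g b)), a - b⟫ := by
    intro a b
    have h1 := (hQ (g a) (hgU a)).2 (Q (g b)) (hQ (g b) (hgU b)).1
    have h2 := (hQ (g b) (hgU b)).2 (Q (g a)) (hQ (g a) (hgU a)).1
    simp only [bregman, hgr, inner_sub_right] at h1 h2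
    have hrw : (-Q (g a)) - (-Q (g b)) = Q (g b) - Q (g a) := by abel
    rw [hrw, real_inner_comm]
    simp only [inner_sub_left, inner_sub_right]
    linarith
  refine ⟨hQcont, hTcont, hmono, ?_⟩
  intro a u hu
  set T : EuclideanSpace ℝ (Fin J) → EuclideanSpace ℝ (Fin J) := fun s => -Q (g s) with hT
  set d := u - T a with hd
  have h2 : ∀ t : ℝ, 0 < t → ⟪u - T (a + t • d), d⟫ ≤ 0 := by
    intro t ht
    have := hu (a + t • d)
    have hab : a - (a + t • d) = -(t • d) := by abel
    rw [hab, inner_neg_right, real_inner_smul_right] at this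
    nlinarith
  have hlim : Filter.Tendsto (fun t : ℝ => ⟪u - T (a + t • d), d⟫) (nhdsWithin 0 (Set.Ioi 0))
      (nhds ⟪u - T a, d⟫) := by
    have hc : Continuous (fun t : ℝ => ⟪u - T (a + t • d), d⟫) := by
      exact (continuous_const.sub (hTcont.comp (continuous_const.add
        (continuous_id.smul continuous_const)))).inner continuous_const
    have := (hc.tendsto 0).mono_left (nhdsWithin_le_nhds (s := Set.Ioi (0:ℝ)))
    simpa using this
  have hle : ⟪u - T a, d⟫ ≤ 0 :=
    le_of_tendsto hlim (Filter.eventually_of_mem self_mem_nhdsWithin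
      (fun t ht => h2 t ht))
  have hdz : d = 0 := by
    have : ⟪d, d⟫ ≤ 0 := by rw [hd]; exact hle
    have h0 := real_inner_self_nonneg (x := d)
    have : ⟪d, d⟫ = 0 := le_antisymm this h0
    exact inner_self_eq_zero.mp this
  have : u - T a = 0 := by rw [← hd]; exact hdz
  have := sub_eq_zero.mp this
  simpa [hT] using this
end
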